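/- Let α > 0, let n ∈ ℕ, and let a < x be real numbers. Then the left-sided Riemann–Liouville fractional integral of order α of the power function τ ↦ τ^n satisfies (1/Γ(α)) ∫_a^x (x - τ)^(α-1) τ^n dτ = n! · (x - a)^α · Σ_{k=0}^{n} a^(n-k) (x - a)^k / ((n - k)! · Γ(α + k + 1)). -/

import Mathlib

open MeasureTheory Real intervalIntegral

lemma rl_intble (α : ℝ) (hα : 0 < α) (k : ℕ) (c : ℝ) :
    IntervalIntegrable (fun s => (c - s) ^ (α - 1) * s ^ k) volume 0 c := by
  have h1 : IntervalIntegrable (fun s : ℝ => s ^ (α - 1)) volume 0 c :=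
    intervalIntegrable_rpow' (by linarith)
  have h2 := (h1.comp_sub_left c)
  simp only [sub_zero, sub_self] at h2
  exact (h2.symm).mul_continuousOn (Continuous.continuousOn (by continuity))

lemma beta_real (α : ℝ) (hα : 0 < α) (k : ℕ) (c : ℝ) (hc : 0 < c) :
    ∫ s in (0:ℝ)..c, (c - s) ^ (α - 1) * s ^ k =
      Real.Gamma α * k.factorial / Real.Gamma (α + k + 1) * c ^ (α + k) := by
  have hscaled := Complex.betaIntegral_scaled ((k : ℂ) + 1) α hc
  have hgamma := Complex.Gamma_mul_Gamma_eq_betaIntegral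
    (s := (k : ℂ) + 1) (t := (α : ℂ)) (by simp; positivity) (by simpa using hα)
  have hne : Complex.Gamma ((k : ℂ) + 1 + α) ≠ 0 :=
    Complex.Gamma_ne_zero_of_re_pos (by simp; positivity)
  have hΓ1 : Complex.Gamma ((k : ℂ) + 1) = (k.factorial : ℂ) :=
    Complex.Gamma_nat_eq_factorial k
  have hΓ2 : Complex.Gamma ((k : ℂ) + 1 + α) = ((Real.Gamma (α + k + 1) : ℝ) : ℂ) := by
    rw [show ((k : ℂ) + 1 + α) = ((α + k + 1 : ℝ) : ℂ) by push_cast; ring,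
      Complex.Gamma_ofReal]
  have hB : Complex.betaIntegral ((k : ℂ) + 1) α =
      ((k.factorial : ℂ) * (Real.Gamma α : ℂ)) / ((Real.Gamma (α + k + 1) : ℝ) : ℂ) := by
    rw [eq_div_iff (by rw [← hΓ2]; exact hne), mul_comm]
    rw [← hΓ2, ← hgamma, hΓ1, Complex.Gamma_ofReal]
  have key : ((∫ s in (0:ℝ)..c, (c - s) ^ (α - 1) * s ^ k : ℝ) : ℂ) =
      ∫ x in (0:ℝ)..c, (x : ℂ) ^ ((k : ℂ) + 1 - 1) * ((c : ℂ) - x) ^ ((α : ℂ) - 1) := by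
    rw [← intervalIntegral.integral_ofReal]
    refine intervalIntegral.integral_congr fun t ht => ?_
    rw [Set.uIcc_of_le hc.le] at ht
    have h1 : (0:ℝ) ≤ c - t := by linarith [ht.2]
    simp only [Complex.ofReal_mul, Complex.ofReal_pow,
      Complex.ofReal_cpow h1, Complex.ofReal_sub]
    rw [show ((k : ℂ) + 1 - 1) = ((k : ℕ) : ℂ) by ring, Complex.cpow_natCast]
    push_cast
    ring
  have hcexp : ((c : ℂ)) ^ ((k : ℂ) + 1 + α - 1) = ((c ^ (α + k) : ℝ) : ℂ) := by
    rw [Complex.ofReal_cpow hc.le]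
    congr 1
    push_cast; ring
  apply Complex.ofReal_injective
  rw [key, hscaled, hB, hcexp]
  push_cast
  ring

theorem rl_integral_monomial (α : ℝ) (hα : 0 < α) (n : ℕ) (a x : ℝ) (hax : a < x) :
    (1 / Real.Gamma α) * ∫ τ in a..x, (x - τ) ^ (α - 1) * τ ^ n =
      (n.factorial : ℝ) * (x - a) ^ α *
        ∑ k ∈ Finset.range (n + 1),
          a ^ (n - k) * (x - a) ^ k / ((n - k).factorial * Real.Gamma (α + k + 1)) := by
  set c := x - a with hc_def
  have hc : 0 < c := sub_pos.mpr hax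
  have h1 : ∫ τ in a..x, (x - τ) ^ (α - 1) * τ ^ n
      = ∫ s in (0:ℝ)..c, (c - s) ^ (α - 1) * (s + a) ^ n := by
    have h := intervalIntegral.integral_comp_add_right
      (a := 0) (b := c) (fun τ => (x - τ) ^ (α - 1) * τ ^ n) a
    rw [zero_add, show c + a = x by rw [hc_def]; ring] at h
    rw [← h]
    refine intervalIntegral.integral_congr fun s _ => ?_
    have : x - (s + a) = c - s := by rw [hc_def]; ring
    simp only [this]
  rw [h1]
  have h2 : ∀ s : ℝ, (c - s) ^ (α - 1) * (s + a) ^ n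
      = ∑ k ∈ Finset.range (n + 1),
          (c - s) ^ (α - 1) * s ^ k * (a ^ (n - k) * (n.choose k : ℝ)) := by
    intro s
    rw [add_pow, Finset.mul_sum]
    exact Finset.sum_congr rfl fun k _ => by ring
  simp_rw [h2]
  rw [intervalIntegral.integral_finset_sum
    (fun k _ => ((rl_intble α hα k c).mul_const _))]
  simp_rw [intervalIntegral.integral_mul_const, beta_real α hα _ c hc]
  rw [Finset.mul_sum, Finset.mul_sum]
  refine Finset.sum_congr rfl fun k hk => ?_
  have hk' : k ≤ n := Nat.lt_succ_iff.mp (Finset.mem_range.mp hk)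
  rw [Real.rpow_add hc, Real.rpow_natCast]
  have hΓα := Real.Gamma_pos_of_pos hα
  have hΓk := Real.Gamma_pos_of_pos (show (0:ℝ) < α + k + 1 by positivity)
  have hch : (n.choose k : ℝ) * k.factorial * (n - k).factorial = n.factorial := by
    exact_mod_cast Nat.choose_mul_factorial_mul_factorial hk'
  field_simp
  linear_combination a ^ (n - k) * hch
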